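/- arXiv:2110.15960 — 2 statements merged into one kernel-verified Lean document; each statement's English description precedes it below -/
import Mathlib

section
/- Let X ∈ ℝ^{N×D} have full column rank, y ∈ ℝ^N, and let z be a random vector in ℝ^D with finite second moments and independent coordinates each of positive variance. Then the function θ ↦ E[‖X(θ ⊙ z) − y‖²] has the unique minimizer θ* = (XᵀX ⊙ E[z zᵀ])⁻¹ ((Xᵀy) ⊙ E[z]). -/
open Matrix MeasureTheory ProbabilityTheory
open scoped Matrix

theorem gated_least_squares_unique_minimizer
    {Ω : Type*} [MeasurableSpace Ω] (μ : Measure Ω) [IsProbabilityMeasure μ]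
    (N D : ℕ) (X : Matrix (Fin N) (Fin D) ℝ) (hX : X.rank = D) (y : Fin N → ℝ)
    (z : Ω → Fin D → ℝ)
    (hmeas : ∀ d : Fin D, Measurable fun ω => z ω d)
    (hint : ∀ d d' : Fin D, Integrable (fun ω => z ω d * z ω d') μ)
    (hindep : iIndepFun (fun d ω => z ω d) μ)
    (hvar : ∀ d : Fin D, 0 < variance (fun ω => z ω d) μ) :
    ∀ θ : Fin D → ℝ,
      θ ≠ ((Xᵀ * X) ⊙ (Matrix.of fun d d' => ∫ ω, z ω d * z ω d' ∂μ))⁻¹.mulVec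
            ((Xᵀ.mulVec y) * fun d => ∫ ω, z ω d ∂μ) →
      (∫ ω, (X.mulVec ((((Xᵀ * X) ⊙ (Matrix.of fun d d' => ∫ ω', z ω' d * z ω' d' ∂μ))⁻¹.mulVec
            ((Xᵀ.mulVec y) * fun d => ∫ ω', z ω' d ∂μ)) * z ω) - y) ⬝ᵥ
          (X.mulVec ((((Xᵀ * X) ⊙ (Matrix.of fun d d' => ∫ ω', z ω' d * z ω' d' ∂μ))⁻¹.mulVec
            ((Xᵀ.mulVec y) * fun d => ∫ ω', z ω' d ∂μ)) * z ω) - y) ∂μ)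
        < ∫ ω, (X.mulVec (θ * z ω) - y) ⬝ᵥ (X.mulVec (θ * z ω) - y) ∂μ := by
  intro θ hθ
  set M : Matrix (Fin D) (Fin D) ℝ := Matrix.of fun d d' => ∫ ω, z ω d * z ω d' ∂μ with hMdef
  set mz : Fin D → ℝ := fun d => ∫ ω, z ω d ∂μ with hmzdef
  set A : Matrix (Fin D) (Fin D) ℝ := (Xᵀ * X) ⊙ M with hAdef
  set b : Fin D → ℝ := Xᵀ.mulVec y * mz with hbdef
  set θs : Fin D → ℝ := A⁻¹.mulVec b with hθsdef
  -- basic integrability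
  have hz2 : ∀ d : Fin D, MemLp (fun ω => z ω d) 2 μ := by
    intro d
    rw [memLp_two_iff_integrable_sq (hmeas d).aestronglyMeasurable]
    simpa [pow_two] using hint d d
  have hz1 : ∀ d : Fin D, Integrable (fun ω => z ω d) μ := fun d =>
    ((hz2 d).mono_exponent (by norm_num)).integrable le_rfl
  -- injectivity of X
  have hinj : Function.Injective X.mulVec := by
    have h := X.mulVecLin.finrank_range_add_finrank_ker
    rw [Matrix.rank] at hX
    rw [hX] at h
    simp [Module.finrank_pi] at h
    exact LinearMap.ker_eq_bot.mp h
  -- positivity of diagonal of XᵀX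
  have hBpos : ∀ d : Fin D, 0 < (Xᵀ * X) d d := by
    intro d
    have hval : (Xᵀ * X) d d = ∑ n, X n d ^ 2 := by
      simp [Matrix.mul_apply, Matrix.transpose_apply, pow_two]
    rw [hval]
    by_contra h
    push_neg at h
    have hzero : ∀ n, X n d = 0 := by
      intro n
      have h0 : ∑ n, X n d ^ 2 = 0 :=
        le_antisymm (by linarith) (Finset.sum_nonneg fun n _ => sq_nonneg _)
      have := (Finset.sum_eq_zero_iff_of_nonneg (fun n _ => sq_nonneg (X n d))).mp h0 n
        (Finset.mem_univ n)
      exact pow_eq_zero_iff (n := 2) (by norm_num) |>.mp this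
    have heq : X.mulVec (Pi.single d 1) = X.mulVec 0 := by
      ext n
      simp [Matrix.mulVec_single, hzero, Matrix.mulVec_zero]
    have := hinj heq
    simpa using congrFun this d
  -- entries of M
  have hMd : ∀ d : Fin D, M d d = variance (fun ω => z ω d) μ + mz d * mz d := by
    intro d
    simp only [hMdef, Matrix.of_apply, hmzdef]
    rw [variance_eq_sub (hz2 d)]
    simp [pow_two]
  have hMo : ∀ d d' : Fin D, d ≠ d' → M d d' = mz d * mz d' := by
    intro d d' h
    exact (hindep.indepFun h).integral_fun_mul_eq_mul_integral (hz1 d).1 (hz1 d').1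
  -- bilinear sum formula
  have bilin : ∀ u w : Fin D → ℝ,
      u ⬝ᵥ A.mulVec w = ∑ d, ∑ d', u d * w d' * (Xᵀ * X) d d' * M d d' := by
    intro u w
    simp only [hAdef, dotProduct, mulVec, Matrix.hadamard_apply, Finset.mul_sum]
    exact Finset.sum_congr rfl fun d _ => Finset.sum_congr rfl fun d' _ => by ring
  have hBsym : ∀ d d' : Fin D, (Xᵀ * X) d d' = (Xᵀ * X) d' d := by
    intro d d'
    simp only [Matrix.mul_apply, Matrix.transpose_apply]
    exact Finset.sum_congr rfl fun n _ => mul_comm _ _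
  have hMsym : ∀ d d' : Fin D, M d d' = M d' d := by
    intro d d'
    simp only [hMdef, Matrix.of_apply]
    congr 1
    ext ω
    ring
  have hAsym : ∀ u w : Fin D → ℝ, u ⬝ᵥ A.mulVec w = w ⬝ᵥ A.mulVec u := by
    intro u w
    rw [bilin, bilin, Finset.sum_comm]
    exact Finset.sum_congr rfl fun d _ => Finset.sum_congr rfl fun d' _ => by
      rw [hBsym d' d, hMsym d' d]; ring
  -- positive definiteness of A
  have hPD : ∀ v : Fin D → ℝ, v ≠ 0 → 0 < v ⬝ᵥ A.mulVec v := by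
    intro v hv
    rw [bilin]
    have hXq : 0 ≤ ∑ d, ∑ d', v d * v d' * (Xᵀ * X) d d' * (mz d * mz d') := by
      have hsum : ∑ d, ∑ d', v d * v d' * (Xᵀ * X) d d' * (mz d * mz d')
          = (v * mz) ⬝ᵥ (Xᵀ * X).mulVec (v * mz) := by
        simp only [dotProduct, mulVec, Pi.mul_apply, Finset.mul_sum]
        exact Finset.sum_congr rfl fun d _ => Finset.sum_congr rfl fun d' _ => by ring
      have hpos : (v * mz) ⬝ᵥ (Xᵀ * X).mulVec (v * mz)
          = X.mulVec (v * mz) ⬝ᵥ X.mulVec (v * mz) := by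
        rw [← Matrix.mulVec_mulVec, Matrix.dotProduct_mulVec, Matrix.vecMul_transpose]
      rw [hsum, hpos]
      exact Finset.sum_nonneg fun n _ => mul_self_nonneg _
    have split : ∀ d d' : Fin D, v d * v d' * (Xᵀ * X) d d' * M d d'
        = v d * v d' * (Xᵀ * X) d d' * (mz d * mz d')
          + (if d' = d then v d ^ 2 * (Xᵀ * X) d d * variance (fun ω => z ω d) μ else 0) := by
      intro d d'
      by_cases hne : d' = d
      · subst hne; rw [hMd]; simp; ring
      · rw [hMo d d' (Ne.symm hne), if_neg hne]; ring
    have hsum2 : ∑ d, ∑ d', v d * v d' * (Xᵀ * X) d d' * M d d'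
        = (∑ d, ∑ d', v d * v d' * (Xᵀ * X) d d' * (mz d * mz d'))
          + ∑ d, v d ^ 2 * (Xᵀ * X) d d * variance (fun ω => z ω d) μ := by
      rw [← Finset.sum_add_distrib]
      refine Finset.sum_congr rfl fun d _ => ?_
      calc ∑ d', v d * v d' * (Xᵀ * X) d d' * M d d'
          = ∑ d', (v d * v d' * (Xᵀ * X) d d' * (mz d * mz d')
              + if d' = d then v d ^ 2 * (Xᵀ * X) d d * variance (fun ω => z ω d) μ else 0) :=
            Finset.sum_congr rfl fun d' _ => split d d'
        _ = _ := by rw [Finset.sum_add_distrib, Finset.sum_ite_eq' Finset.univ d]; simp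
    rw [hsum2]
    have hpos : 0 < ∑ d, v d ^ 2 * (Xᵀ * X) d d * variance (fun ω => z ω d) μ := by
      obtain ⟨d0, hd0⟩ := Function.ne_iff.mp hv
      refine Finset.sum_pos' (fun d _ =>
          mul_nonneg (mul_nonneg (sq_nonneg _) (hBpos d).le) (hvar d).le)
        ⟨d0, Finset.mem_univ d0, ?_⟩
      have h2 : 0 < v d0 ^ 2 := by apply sq_pos_of_ne_zero; exact hd0
      exact mul_pos (mul_pos h2 (hBpos d0)) (hvar d0)
    linarith
  -- A θs = b
  have hAθs : A.mulVec θs = b := by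
    have hdet : IsUnit A.det := by
      rw [isUnit_iff_ne_zero]
      intro h
      obtain ⟨v, hv0, hAv⟩ := (Matrix.exists_mulVec_eq_zero_iff (M := A)).mpr h
      have := hPD v hv0
      rw [hAv] at this
      simp at this
    rw [hθsdef, Matrix.mulVec_mulVec, Matrix.mul_nonsing_inv _ hdet, Matrix.one_mulVec]
  -- expansion of the objective
  have key : ∀ v : Fin D → ℝ,
      (∫ ω, (X.mulVec (v * z ω) - y) ⬝ᵥ (X.mulVec (v * z ω) - y) ∂μ)
        = v ⬝ᵥ A.mulVec v - 2 * (v ⬝ᵥ b) + y ⬝ᵥ y := by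
    intro v
    have hpt : ∀ ω, (X.mulVec (v * z ω) - y) ⬝ᵥ (X.mulVec (v * z ω) - y)
        = (∑ d, ∑ d', v d * v d' * (Xᵀ * X) d d' * (z ω d * z ω d'))
          - 2 * (∑ d, v d * Xᵀ.mulVec y d * z ω d) + y ⬝ᵥ y := by
      intro ω
      have h1 : (v * z ω) ⬝ᵥ (Xᵀ * X).mulVec (v * z ω)
          = X.mulVec (v * z ω) ⬝ᵥ X.mulVec (v * z ω) := by
        rw [← Matrix.mulVec_mulVec, Matrix.dotProduct_mulVec, Matrix.vecMul_transpose]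
      have h2 : (v * z ω) ⬝ᵥ Xᵀ.mulVec y = X.mulVec (v * z ω) ⬝ᵥ y := by
        rw [Matrix.dotProduct_mulVec, Matrix.vecMul_transpose]
      have h3 : (v * z ω) ⬝ᵥ (Xᵀ * X).mulVec (v * z ω)
          = ∑ d, ∑ d', v d * v d' * (Xᵀ * X) d d' * (z ω d * z ω d') := by
        simp only [dotProduct, mulVec, Pi.mul_apply, Finset.mul_sum]
        exact Finset.sum_congr rfl fun d _ => Finset.sum_congr rfl fun d' _ => by ring
      have h4 : (v * z ω) ⬝ᵥ Xᵀ.mulVec y = ∑ d, v d * Xᵀ.mulVec y d * z ω d := by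
        simp only [dotProduct, Pi.mul_apply]
        exact Finset.sum_congr rfl fun d _ => by ring
      simp only [dotProduct_sub, sub_dotProduct]
      rw [← h1, ← h2, h3, h4, dotProduct_comm y (X.mulVec (v * z ω)), ← h2, h4]
      ring
    simp only [hpt]
    have hq : Integrable
        (fun ω => ∑ d, ∑ d', v d * v d' * (Xᵀ * X) d d' * (z ω d * z ω d')) μ :=
      integrable_finset_sum _ fun d _ => integrable_finset_sum _ fun d' _ =>
        (hint d d').const_mul _
    have hl : Integrable (fun ω => 2 * ∑ d, v d * Xᵀ.mulVec y d * z ω d) μ :=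
      (integrable_finset_sum _ fun d _ => (hz1 d).const_mul _).const_mul _
    have hql : Integrable
        (fun ω => (∑ d, ∑ d', v d * v d' * (Xᵀ * X) d d' * (z ω d * z ω d'))
          - 2 * ∑ d, v d * Xᵀ.mulVec y d * z ω d) μ := hq.sub hl
    rw [integral_add hql (integrable_const _), integral_sub hq hl,
      integral_finset_sum _ fun d _ => integrable_finset_sum _ fun d' _ =>
        (hint d d').const_mul _,
      integral_const_mul, integral_finset_sum _ fun d _ => (hz1 d).const_mul _]
    simp only [integral_const_mul, integral_const, probReal_univ, ENNReal.toReal_one, smul_eq_mul,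
      one_mul]
    have hquad : v ⬝ᵥ A.mulVec v = ∑ d, ∑ d', v d * v d' * (Xᵀ * X) d d' * M d d' := bilin v v
    have hlin : v ⬝ᵥ b = ∑ d, v d * Xᵀ.mulVec y d * mz d := by
      simp only [hbdef, dotProduct, Pi.mul_apply]
      exact Finset.sum_congr rfl fun d _ => by ring
    rw [hquad, hlin]
    congr 2
    exact Finset.sum_congr rfl fun d _ => by
      rw [integral_finset_sum _ fun d' _ => (hint d d').const_mul _]
      exact Finset.sum_congr rfl fun d' _ => by rw [integral_const_mul]; rfl
  -- conclude
  rw [key θ, key θs]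
  have hu : θ - θs ≠ 0 := sub_ne_zero.mpr hθ
  have hupos : 0 < (θ - θs) ⬝ᵥ A.mulVec (θ - θs) := hPD _ hu
  have hexp : (θ - θs) ⬝ᵥ A.mulVec (θ - θs)
      = θ ⬝ᵥ A.mulVec θ - 2 * (θ ⬝ᵥ b) + θs ⬝ᵥ b := by
    rw [Matrix.mulVec_sub, dotProduct_sub, sub_dotProduct,
      sub_dotProduct, hAsym θs θ, hAθs]
    ring
  have hθsb : θs ⬝ᵥ A.mulVec θs = θs ⬝ᵥ b := by rw [hAθs]
  rw [hθsb]
  linarith [hupos, hexp]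
end

section
/- Let β*, β̂ ∈ ℝ^D, suppose β* has exactly K nonzero entries, each of magnitude greater than η > 0, and suppose ‖β̂ − β*‖₂ < η/2. Then the set of indices of the K largest-magnitude entries of β̂ equals the support of β*. -/
open Finset

theorem topK_recovers_support
    (D K : ℕ) (η : ℝ) (hη : 0 < η) (βstar βhat : Fin D → ℝ)
    (hsupp : (Finset.univ.filter fun i => βstar i ≠ 0).card = K)
    (hmag : ∀ i, βstar i ≠ 0 → η < |βstar i|)
    (herr : Real.sqrt (∑ i, (βhat i - βstar i) ^ 2) < η / 2) :
    ∀ S : Finset (Fin D), S.card = K →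
      (∀ i ∈ S, ∀ j ∉ S, |βhat j| ≤ |βhat i|) →
      S = Finset.univ.filter fun i => βstar i ≠ 0 := by
  intro S hScard hStop
  set T := Finset.univ.filter fun i => βstar i ≠ 0 with hT
  -- pointwise error bound
  have hpt : ∀ i, |βhat i - βstar i| < η / 2 := by
    intro i
    have h1 : (βhat i - βstar i) ^ 2 ≤ ∑ j, (βhat j - βstar j) ^ 2 :=
      Finset.single_le_sum (f := fun j => (βhat j - βstar j) ^ 2)
        (fun j _ => sq_nonneg _) (Finset.mem_univ i)
    have h2 : |βhat i - βstar i| ≤ Real.sqrt (∑ j, (βhat j - βstar j) ^ 2) := by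
      rw [← Real.sqrt_sq_eq_abs]
      exact Real.sqrt_le_sqrt h1
    linarith
  have hbig : ∀ i ∈ T, η / 2 < |βhat i| := by
    intro i hi
    have hne : βstar i ≠ 0 := (Finset.mem_filter.mp hi).2
    have := hmag i hne
    have := hpt i
    have := abs_sub_abs_le_abs_sub (βstar i) (βhat i)
    rw [abs_sub_comm] at this
    linarith
  have hsmall : ∀ i, i ∉ T → |βhat i| < η / 2 := by
    intro i hi
    have hz : βstar i = 0 := by
      by_contra h
      exact hi (Finset.mem_filter.mpr ⟨Finset.mem_univ i, h⟩)
    have hp := hpt i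
    rw [hz, sub_zero] at hp
    exact hp
  -- show S = T
  by_contra hne
  -- there exists i ∈ T \ S and j ∈ S \ T
  have hcard : S.card = T.card := by rw [hScard, hsupp]
  have h1 : ∃ i, i ∈ T ∧ i ∉ S := by
    by_contra h
    push_neg at h
    have hsub : T ⊆ S := fun i hi => h i hi
    exact hne (Finset.eq_of_subset_of_card_le hsub (le_of_eq hcard)).symm
  have h2 : ∃ j, j ∈ S ∧ j ∉ T := by
    by_contra h
    push_neg at h
    have hsub : S ⊆ T := fun j hj => h j hj
    exact hne (Finset.eq_of_subset_of_card_le hsub (le_of_eq hcard.symm))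
  obtain ⟨i, hiT, hiS⟩ := h1
  obtain ⟨j, hjS, hjT⟩ := h2
  have := hStop j hjS i hiS
  have := hbig i hiT
  have := hsmall j hjT
  linarith
end
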